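/- In the projection setup, for every v ∈ ℝⁿ one has ν(v) = Σ_{j : Fin m} (⟨v, x j⟩ / d j) • ν(g ĵ), where ĵ : Fin n denotes the index with (ĵ : ℕ) = (j : ℕ). (This is the formula for the orthogonal projection established in the proof of Lemma 3.8.) -/

import Mathlib

open RealInnerProductSpace

/-- Formula for the orthogonal projection established in the proof of
Lemma 3.8: `ν(v) = Σ_j (⟨v, x j⟩ / d j) • ν(g ĵ)`. -/
theorem stmt6 (n m : ℕ) (hn : 0 < n) (hmn : m ≤ n)
    (g : Fin n → EuclideanSpace ℝ (Fin n))
    (hg : LinearIndependent ℝ g)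
    (hgspan : Submodule.span ℝ (Set.range g) = ⊤)
    (x : Fin m → EuclideanSpace ℝ (Fin n)) (d : Fin m → ℝ)
    (hd : ∀ j, 0 < d j)
    (hpair : ∀ (i : Fin n) (j : Fin m),
      ⟪g i, x j⟫ = if (i : ℕ) = (j : ℕ) then d j else 0)
    (V : Submodule ℝ (EuclideanSpace ℝ (Fin n)))
    (hV : V = Submodule.span ℝ {v | ∃ i : Fin n, m ≤ (i : ℕ) ∧ v = g i})
    (ν : EuclideanSpace ℝ (Fin n) → EuclideanSpace ℝ (Fin n))
    (hν : ∀ v, ν v = (Submodule.orthogonalProjectionOnto Vᗮ v : EuclideanSpace ℝ (Fin n))) :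
    ∀ v, ν v = ∑ j : Fin m, (⟪v, x j⟫ / d j) • ν (g (Fin.castLE hmn j)) := by
  classical
  intro v
  set b : Module.Basis (Fin n) ℝ (EuclideanSpace ℝ (Fin n)) :=
    Module.Basis.mk hg (by rw [hgspan]) with hbdef
  have hb : ∀ i, b i = g i := fun i => Module.Basis.mk_apply hg _ i
  set P : EuclideanSpace ℝ (Fin n) →ₗ[ℝ] EuclideanSpace ℝ (Fin n) :=
    (Vᗮ).subtype.comp (Submodule.orthogonalProjectionOnto Vᗮ).toLinearMap with hPdef
  have hνP : ∀ w, ν w = P w := fun w => hν w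
  have hv : v = ∑ i : Fin n, b.repr v i • g i := by
    conv_lhs => rw [← b.sum_repr v]
    simp [hb]
  have hzero : ∀ i : Fin n, m ≤ (i : ℕ) → ν (g i) = 0 := by
    intro i hi
    have hmem : g i ∈ V := hV ▸ Submodule.subset_span ⟨i, hi, rfl⟩
    have hmem2 : g i ∈ Vᗮᗮ := Submodule.le_orthogonal_orthogonal V hmem
    rw [hν, Submodule.orthogonalProjectionOnto_apply_of_mem_orthogonal hmem2]
    rfl
  have h1 : ν v = ∑ i : Fin n, b.repr v i • ν (g i) := by
    rw [hνP]
    conv_lhs => rw [hv]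
    rw [map_sum]
    refine Finset.sum_congr rfl fun i _ => ?_
    rw [map_smul, hνP]
  have hrepr : ∀ j : Fin m, b.repr v (Fin.castLE hmn j) = ⟪v, x j⟫ / d j := by
    intro j
    have hinner : ⟪v, x j⟫ = b.repr v (Fin.castLE hmn j) * d j := by
      conv_lhs => rw [hv]
      rw [sum_inner]
      have : ∀ i : Fin n,
          ⟪b.repr v i • g i, x j⟫ =
            if i = Fin.castLE hmn j then b.repr v i * d j else 0 := by
        intro i
        rw [real_inner_smul_left, hpair]
        have hcond : ((i : ℕ) = (j : ℕ)) ↔ i = Fin.castLE hmn j := by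
          constructor
          · intro h; exact Fin.ext (by simpa using h)
          · intro h; subst h; simp
        by_cases h : i = Fin.castLE hmn j
        · simp [h, hcond.mpr h]
        · have : ¬ ((i : ℕ) = (j : ℕ)) := fun hh => h (hcond.mp hh)
          simp [h, this]
      simp_rw [this]
      rw [Finset.sum_ite_eq' Finset.univ (Fin.castLE hmn j)
        (fun i => b.repr v i * d j)]
      simp
    rw [hinner]
    field_simp [(hd j).ne']
  rw [h1]
  have hsum : ∑ i : Fin n, b.repr v i • ν (g i) =
      ∑ j : Fin m, b.repr v (Fin.castLE hmn j) • ν (g (Fin.castLE hmn j)) := by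
    symm
    rw [← Finset.sum_image
      (f := fun i : Fin n => b.repr v i • ν (g i))
      (g := Fin.castLE hmn)
      (by intro a _ c _ h; exact Fin.castLE_injective hmn h)]
    apply Finset.sum_subset (Finset.subset_univ _)
    intro i _ hi
    have : m ≤ (i : ℕ) := by
      by_contra h
      push_neg at h
      exact hi (Finset.mem_image.mpr ⟨⟨i, h⟩, Finset.mem_univ _, Fin.ext rfl⟩)
    rw [hzero i this, smul_zero]
  rw [hsum]
  exact Finset.sum_congr rfl fun j _ => by rw [hrepr j]
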